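/- Let ε, T, B > 0 and M > 1 be real numbers. Let F ∈ C¹([0,T]) and g ∈ C([0,T]) be nonnegative functions with ∫_0^T g(t) dt ≤ B, F(0) ≤ ε, and F'(t) ≤ g(t)(ε + F(t) + F(t)^M) for all t ∈ [0,T]. If ε ≤ (3e^B)^{−M/(M−1)}, then F(t) ≤ 3ε e^B for all t ∈ [0,T]. -/

import Mathlib

open MeasureTheory Real
open scoped NNReal ENNReal

/-- nonlinear Gronwall-type lemma. -/
theorem nonlinear_gronwall (ε T B M : ℝ) (hε : 0 < ε) (hT : 0 < T) (hB : 0 < B)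
    (hM : 1 < M) (F F' g : ℝ → ℝ)
    (hF' : ∀ t ∈ Set.Icc 0 T, HasDerivWithinAt F (F' t) (Set.Icc 0 T) t)
    (hF'cont : ContinuousOn F' (Set.Icc 0 T))
    (hgcont : ContinuousOn g (Set.Icc 0 T))
    (hFpos : ∀ t ∈ Set.Icc 0 T, 0 ≤ F t)
    (hgpos : ∀ t ∈ Set.Icc 0 T, 0 ≤ g t)
    (hgint : ∫ t in (0 : ℝ)..T, g t ≤ B)
    (hF0 : F 0 ≤ ε)
    (hode : ∀ t ∈ Set.Icc 0 T, F' t ≤ g t * (ε + F t + F t ^ M))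
    (hsmall : ε ≤ (3 * Real.exp B) ^ (-(M / (M - 1)))) :
    ∀ t ∈ Set.Icc 0 T, F t ≤ 3 * ε * Real.exp B := by
  set K : ℝ := 3 * ε * Real.exp B with hKdef
  have hexpB : (1 : ℝ) ≤ Real.exp B := Real.one_le_exp hB.le
  have h3e : (0 : ℝ) < 3 * Real.exp B := by positivity
  have hεK : ε ≤ K := by nlinarith
  have hKpos : 0 < K := lt_of_lt_of_le hε hεK
  -- power bound: 0 ≤ x ≤ K → x ^ M ≤ ε
  have hpow : ∀ x : ℝ, 0 ≤ x → x ≤ K → x ^ M ≤ ε := by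
    intro x hx hxK
    have hM0 : (0 : ℝ) ≤ M := by linarith
    have h1 : x ^ M ≤ K ^ M := Real.rpow_le_rpow hx hxK hM0
    have hKM : K ^ M = (3 * Real.exp B) ^ M * ε ^ M := by
      rw [hKdef, show 3 * ε * Real.exp B = (3 * Real.exp B) * ε by ring,
        Real.mul_rpow h3e.le hε.le]
    have hεM1 : ε ^ (M - 1) ≤ (3 * Real.exp B) ^ (-M) := by
      have := Real.rpow_le_rpow hε.le hsmall (by linarith : (0:ℝ) ≤ M - 1)
      have hM1 : M - 1 ≠ 0 := sub_ne_zero.2 hM.ne'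
      calc ε ^ (M - 1) ≤ ((3 * Real.exp B) ^ (-(M / (M - 1)))) ^ (M - 1) := this
        _ = (3 * Real.exp B) ^ (-(M / (M - 1)) * (M - 1)) :=
            (Real.rpow_mul h3e.le _ _).symm
        _ = (3 * Real.exp B) ^ (-M) := by
            congr 1
            field_simp
    have hεM : ε ^ M ≤ (3 * Real.exp B) ^ (-M) * ε := by
      have : ε ^ M = ε ^ (M - 1) * ε := by
        rw [← Real.rpow_add_one hε.ne' (M - 1)]; ring_nf
      rw [this]
      exact mul_le_mul_of_nonneg_right hεM1 hε.le
    have hfin : (3 * Real.exp B) ^ M * ((3 * Real.exp B) ^ (-M) * ε) = ε := by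
      rw [← mul_assoc, ← Real.rpow_add h3e]
      simp
    calc x ^ M ≤ K ^ M := h1
      _ = (3 * Real.exp B) ^ M * ε ^ M := hKM
      _ ≤ (3 * Real.exp B) ^ M * ((3 * Real.exp B) ^ (-M) * ε) := by
          apply mul_le_mul_of_nonneg_left hεM (Real.rpow_nonneg h3e.le M)
      _ = ε := hfin
  -- basic continuity / integrability facts
  have hFcont : ContinuousOn F (Set.Icc 0 T) := fun t ht =>
    (hF' t ht).continuousWithinAt
  have huIcc : Set.uIcc (0:ℝ) T = Set.Icc 0 T := Set.uIcc_of_le hT.le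
  have hgInt : IntervalIntegrable g volume 0 T := by
    apply ContinuousOn.intervalIntegrable
    rwa [huIcc]
  set I : ℝ → ℝ := fun t => ∫ s in (0:ℝ)..t, g s with hIdef
  have hgIntSub : ∀ s ∈ Set.Icc (0:ℝ) T, IntervalIntegrable g volume 0 s := by
    intro s hs
    apply hgInt.mono_set
    rw [huIcc, Set.uIcc_of_le hs.1]
    exact Set.Icc_subset_Icc le_rfl hs.2
  have hIB : ∀ s ∈ Set.Icc (0:ℝ) T, I s ≤ B := by
    intro s hs
    have h2 : IntervalIntegrable g volume s T := by
      apply hgInt.mono_set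
      rw [huIcc, Set.uIcc_of_le hs.2]
      exact Set.Icc_subset_Icc hs.1 le_rfl
    have hsplit : I s + ∫ t in s..T, g t = ∫ t in (0:ℝ)..T, g t :=
      intervalIntegral.integral_add_adjacent_intervals (hgIntSub s hs) h2
    have hnn : 0 ≤ ∫ t in s..T, g t := by
      apply intervalIntegral.integral_nonneg hs.2
      intro u hu
      exact hgpos u ⟨le_trans hs.1 hu.1, hu.2⟩
    linarith
  have hIcont : ContinuousOn I (Set.Icc 0 T) := by
    have h := intervalIntegral.continuousOn_primitive_interval
      (f := g) (μ := volume) (a := (0:ℝ)) (b := T)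
      (by rw [huIcc]; exact hgcont.integrableOn_Icc)
    rwa [huIcc] at h
  have hI0 : I 0 = 0 := intervalIntegral.integral_same
  -- derivative facts at interior points
  have hinterior : ∀ x, x ∈ Set.Ioo (0:ℝ) T → Set.Icc 0 T ∈ nhds x := by
    intro x hx
    exact Icc_mem_nhds hx.1 hx.2
  have hIderiv : ∀ x ∈ Set.Ioo (0:ℝ) T, HasDerivAt I (g x) x := by
    intro x hx
    apply intervalIntegral.integral_hasDerivAt_right
      (hgIntSub x ⟨hx.1.le, hx.2.le⟩)
    · exact (hgcont.mono Set.Ioo_subset_Icc_self).stronglyMeasurableAtFilter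
        isOpen_Ioo x hx
    · exact ((hgcont.mono Set.Ioo_subset_Icc_self) x hx).continuousAt
        (isOpen_Ioo.mem_nhds hx)
  set ψ : ℝ → ℝ := fun t => (2 * ε + F t) * Real.exp (-(I t)) with hψdef
  have hψ0 : ψ 0 ≤ 3 * ε := by
    simp only [hψdef, hI0, neg_zero, Real.exp_zero, mul_one]
    linarith
  -- key lemma
  have key : ∀ c ∈ Set.Icc (0:ℝ) T, (∀ s ∈ Set.Icc 0 c, F s ≤ K) →
      ∀ s ∈ Set.Icc 0 c, F s ≤ K - 2 * ε := by
    intro c hc hbd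
    have hsub : Set.Icc (0:ℝ) c ⊆ Set.Icc 0 T := Set.Icc_subset_Icc le_rfl hc.2
    have hψcont : ContinuousOn ψ (Set.Icc 0 c) :=
      (continuousOn_const.add (hFcont.mono hsub)).mul
        (((hIcont.mono hsub).neg).rexp)
    have hψderiv : ∀ x ∈ Set.Ioo (0:ℝ) c,
        HasDerivAt ψ ((F' x - g x * (2 * ε + F x)) * Real.exp (-(I x))) x := by
      intro x hx
      have hxIoo : x ∈ Set.Ioo (0:ℝ) T := ⟨hx.1, lt_of_lt_of_le hx.2 hc.2⟩
      have hxIcc : x ∈ Set.Icc (0:ℝ) T := ⟨hxIoo.1.le, hxIoo.2.le⟩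
      have hF : HasDerivAt F (F' x) x :=
        (hF' x hxIcc).hasDerivAt (hinterior x hxIoo)
      have hIx : HasDerivAt I (g x) x := hIderiv x hxIoo
      have hE : HasDerivAt (fun t => Real.exp (-(I t)))
          (Real.exp (-(I x)) * (-(g x))) x := by
        exact (Real.hasDerivAt_exp (-(I x))).comp x hIx.neg
      have := ((hF.const_add (2 * ε)).mul hE)
      convert this using 1
      · rfl
      · rfl
      · rfl
      ring
    have hψanti : AntitoneOn ψ (Set.Icc 0 c) := by
      apply antitoneOn_of_deriv_nonpos (convex_Icc 0 c) hψcont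
      · intro x hx
        rw [interior_Icc] at hx
        exact ((hψderiv x hx).differentiableAt).differentiableWithinAt
      · intro x hx
        rw [interior_Icc] at hx
        rw [(hψderiv x hx).deriv]
        have hxIcc : x ∈ Set.Icc (0:ℝ) T :=
          ⟨hx.1.le, le_trans hx.2.le hc.2⟩
        have hFx : F x ≤ K := hbd x ⟨hx.1.le, hx.2.le⟩
        have hFM : F x ^ M ≤ ε := hpow (F x) (hFpos x hxIcc) hFx
        have hF'x : F' x ≤ g x * (2 * ε + F x) := by
          calc F' x ≤ g x * (ε + F x + F x ^ M) := hode x hxIcc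
            _ ≤ g x * (ε + F x + ε) :=
                mul_le_mul_of_nonneg_left (by linarith) (hgpos x hxIcc)
            _ = g x * (2 * ε + F x) := by ring
        apply mul_nonpos_of_nonpos_of_nonneg
        · linarith
        · positivity
    intro s hs
    have h0mem : (0:ℝ) ∈ Set.Icc (0:ℝ) c := Set.left_mem_Icc.2 hc.1
    have hψs : ψ s ≤ 3 * ε := le_trans (hψanti h0mem hs hs.1) hψ0
    have hsT : s ∈ Set.Icc (0:ℝ) T := hsub hs
    have hIsB : I s ≤ B := hIB s hsT
    have hexp : Real.exp (I s) ≤ Real.exp B := Real.exp_le_exp.2 hIsB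
    have h2 : 2 * ε + F s ≤ 3 * ε * Real.exp (I s) := by
      have hpos : 0 < Real.exp (-(I s)) := Real.exp_pos _
      have := hψs
      rw [hψdef] at this
      have h3 : (2 * ε + F s) * Real.exp (-(I s)) * Real.exp (I s)
          ≤ 3 * ε * Real.exp (I s) :=
        mul_le_mul_of_nonneg_right this (Real.exp_pos _).le
      rwa [mul_assoc, ← Real.exp_add, neg_add_cancel, Real.exp_zero, mul_one] at h3
    have : 2 * ε + F s ≤ 3 * ε * Real.exp B := by
      calc 2 * ε + F s ≤ 3 * ε * Real.exp (I s) := h2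
        _ ≤ 3 * ε * Real.exp B := by nlinarith
    rw [hKdef]; linarith
  -- bootstrap via sSup
  set S : Set ℝ := {t | t ∈ Set.Icc (0:ℝ) T ∧ ∀ s ∈ Set.Icc 0 t, F s ≤ K} with hSdef
  have h0S : (0:ℝ) ∈ S := by
    refine ⟨⟨le_rfl, hT.le⟩, ?_⟩
    intro s hs
    have : s = 0 := le_antisymm hs.2 hs.1
    rw [this]; exact hF0.trans hεK
  have hSbdd : BddAbove S := ⟨T, fun t ht => ht.1.2⟩
  have hSne : S.Nonempty := ⟨0, h0S⟩
  set c : ℝ := sSup S with hcdef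
  have hc0 : 0 ≤ c := le_csSup hSbdd h0S
  have hcT : c ≤ T := csSup_le hSne fun t ht => ht.1.2
  have hcIcc : c ∈ Set.Icc (0:ℝ) T := ⟨hc0, hcT⟩
  -- F ≤ K on [0, c]
  have hlt_bd : ∀ s, 0 ≤ s → s < c → F s ≤ K := by
    intro s hs0 hlt
    obtain ⟨t, htS, hst⟩ := exists_lt_of_lt_csSup hSne hlt
    exact htS.2 s ⟨hs0, hst.le⟩
  have hFcK : F c ≤ K := by
    rcases eq_or_lt_of_le hc0 with h0 | h0
    · rw [← h0]; exact hF0.trans hεK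
    · have hcont : ContinuousWithinAt F (Set.Ico 0 c) c :=
        (hFcont c hcIcc).mono
          (Set.Subset.trans Set.Ico_subset_Icc_self
            (Set.Icc_subset_Icc le_rfl hcT))
      haveI : Filter.NeBot (nhdsWithin c (Set.Ico 0 c)) :=
        right_nhdsWithin_Ico_neBot h0
      apply le_of_tendsto hcont
      filter_upwards [self_mem_nhdsWithin] with u hu
      exact hlt_bd u hu.1 hu.2
  have hbd : ∀ s ∈ Set.Icc (0:ℝ) c, F s ≤ K := by
    intro s hs
    rcases lt_or_eq_of_le hs.2 with hlt | heq
    · exact hlt_bd s hs.1 hlt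
    · rw [heq]; exact hFcK
  have hstrict : ∀ s ∈ Set.Icc (0:ℝ) c, F s ≤ K - 2 * ε := key c hcIcc hbd
  -- show c = T
  have hcT' : c = T := by
    by_contra hne
    have hclt : c < T := lt_of_le_of_ne hcT hne
    have hFc : F c < K := by
      have := hstrict c ⟨hc0, le_rfl⟩
      linarith
    have hcontc : ContinuousWithinAt F (Set.Icc 0 T) c := hFcont c hcIcc
    have hev : ∀ᶠ u in nhdsWithin c (Set.Icc 0 T), F u < K :=
      hcontc.eventually_lt continuousWithinAt_const hFc
    rw [eventually_nhdsWithin_iff, Metric.eventually_nhds_iff] at hev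
    obtain ⟨δ, hδ, hδball⟩ := hev
    set t : ℝ := min T (c + δ / 2) with htdef
    have htc : c < t := lt_min hclt (by linarith)
    have htT : t ≤ T := min_le_left _ _
    have htS : t ∈ S := by
      refine ⟨⟨le_trans hc0 htc.le, htT⟩, ?_⟩
      intro u hu
      rcases le_or_gt u c with huc | huc
      · exact hbd u ⟨hu.1, huc⟩
      · have huT : u ∈ Set.Icc (0:ℝ) T := ⟨hu.1, hu.2.trans htT⟩
        have hdist : dist u c < δ := by
          rw [Real.dist_eq, abs_of_pos (by linarith)]
          have : u ≤ c + δ / 2 := hu.2.trans (min_le_right _ _)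
          linarith
        exact (hδball hdist huT).le

    have : t ≤ c := le_csSup hSbdd htS
    linarith
  intro t ht
  have := hbd t (by rw [hcT']; exact ht)
  exact this
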